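/- Let K, C be convex bodies in R^n with K ⊂ C and R(K, C) = 1. Then there exist points p^1,...,p^j ∈ K ∩ ∂C with 2 ≤ j ≤ n+1, outer normal vectors u^1,...,u^j to C at p^1,...,p^j respectively, and positive scalars λ_1,...,λ_j with Σ_{i=1}^j λ_i u^i = 0. -/

import Mathlib

open Metric Finset Pointwise

/-- The circumradius of `K` with respect to `C`: the smallest `ρ ≥ 0` such that `K` is
contained in a translate of `ρ • C`. -/
noncomputable def circC {n : ℕ} (K C : Set (EuclideanSpace ℝ (Fin n))) : ℝ :=
  sInf {ρ : ℝ | 0 ≤ ρ ∧ ∃ x : EuclideanSpace ℝ (Fin n), K ⊆ x +ᵥ ρ • C}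

open scoped RealInnerProductSpace

section Aux

variable {E : Type*} [NormedAddCommGroup E] [InnerProductSpace ℝ E]

/-- Support function. -/
noncomputable def suppF (C : Set E) (u : E) : ℝ := sSup ((fun y => ⟪y, u⟫) '' C)

theorem le_suppF {C : Set E} (hC : IsCompact C) {y : E} (hy : y ∈ C) (u : E) :
    ⟪y, u⟫ ≤ suppF C u :=
  le_csSup (hC.image (continuous_id.inner continuous_const)).bddAbove ⟨y, hy, rfl⟩

theorem suppF_le {C : Set E} (hC : C.Nonempty) {u : E} {a : ℝ}
    (h : ∀ y ∈ C, ⟪y, u⟫ ≤ a) : suppF C u ≤ a :=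
  csSup_le (hC.image _) (by rintro _ ⟨y, hy, rfl⟩; exact h y hy)

theorem continuous_suppF {C : Set E} (hC : IsCompact C) (hne : C.Nonempty) :
    Continuous (suppF C) := by
  obtain ⟨r, hr⟩ := hC.isBounded.subset_closedBall 0
  set M : ℝ := max r 0 with hM
  have hMy : ∀ y ∈ C, ‖y‖ ≤ M := fun y hy => by
    have := hr hy
    rw [mem_closedBall, dist_zero_right] at this
    exact this.trans (le_max_left _ _)
  have key : ∀ u u' : E, suppF C u - suppF C u' ≤ M * ‖u - u'‖ := by
    intro u u'
    rw [sub_le_iff_le_add]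
    refine suppF_le hne fun y hy => ?_
    have h1 : ⟪y, u⟫ - ⟪y, u'⟫ = ⟪y, u - u'⟫ := (inner_sub_right y u u').symm
    have h2 : ⟪y, u - u'⟫ ≤ ‖y‖ * ‖u - u'‖ := real_inner_le_norm _ _
    have h3 : ‖y‖ * ‖u - u'‖ ≤ M * ‖u - u'‖ :=
      mul_le_mul_of_nonneg_right (hMy y hy) (norm_nonneg _)
    have h4 : ⟪y, u'⟫ ≤ suppF C u' := le_suppF hC hy u'
    linarith
  have : LipschitzWith ⟨M, le_max_right _ _⟩ (suppF C) := by
    refine LipschitzWith.of_dist_le_mul fun u u' => ?_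
    rw [Real.dist_eq, dist_eq_norm]
    rcases abs_sub_le_iff.2 ⟨key u u', by rw [← norm_neg, neg_sub]; exact key u' u⟩ with h
    exact h
  exact this.continuous

variable [CompleteSpace E]

theorem mem_interior_of_suppF {C : Set E} (hconv : Convex ℝ C) (hint : (interior C).Nonempty)
    {y : E} (h : ∀ u : E, ‖u‖ = 1 → ⟪y, u⟫ < suppF C u) : y ∈ interior C := by
  by_contra hy
  obtain ⟨f, hf⟩ := geometric_hahn_banach_open_point hconv.interior isOpen_interior hy
  obtain ⟨a, ha⟩ := hint
  have hfC : ∀ c ∈ C, f c ≤ f y := by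
    intro c hc
    have hev : ∀ᶠ s : ℝ in nhdsWithin 0 (Set.Ioi 0),
        (1 - s) * f c + s * f a ≤ f y := by
      filter_upwards [Ioo_mem_nhdsGT_of_mem (Set.left_mem_Ico.2 one_pos)] with s hs
      have hmem : (1 - s) • c + s • a ∈ interior C :=
        hconv.combo_closure_interior_mem_interior (subset_closure hc) ha
          (by linarith [hs.2]) hs.1 (by ring)
      have := hf _ hmem
      simpa [map_add, map_smul, smul_eq_mul] using this.le
    have htend : Filter.Tendsto (fun s : ℝ => (1 - s) * f c + s * f a)
        (nhdsWithin 0 (Set.Ioi 0)) (nhds (f c)) := by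
      have hcont : Continuous (fun s : ℝ => (1 - s) * f c + s * f a) := by continuity
      have := hcont.tendsto 0
      simp only [sub_zero, one_mul, zero_mul, add_zero] at this
      exact this.mono_left nhdsWithin_le_nhds
    exact le_of_tendsto htend hev
  have hfne : f ≠ 0 := by
    intro h0
    have := hf a ha
    rw [h0] at this
    simp at this
  set w := (InnerProductSpace.toDual ℝ E).symm f with hwdef
  have hw : ∀ x : E, ⟪w, x⟫ = f x := fun x => InnerProductSpace.toDual_symm_apply
  have hwne : w ≠ 0 := by
    intro h0
    apply hfne
    ext x
    rw [← hw x, h0, inner_zero_left]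
    rfl
  set u := ‖w‖⁻¹ • w with hudef
  have hu : ‖u‖ = 1 := by
    rw [hudef, norm_smul, norm_inv, norm_norm, inv_mul_cancel₀ (norm_ne_zero_iff.2 hwne)]
  have hlt := h u hu
  have hge : suppF C u ≤ ⟪y, u⟫ := by
    refine suppF_le ⟨a, interior_subset ha⟩ fun c hc => ?_
    have h1 : ⟪c, u⟫ = ‖w‖⁻¹ * f c := by
      rw [hudef, real_inner_smul_right, real_inner_comm, hw]
    have h2 : ⟪y, u⟫ = ‖w‖⁻¹ * f y := by
      rw [hudef, real_inner_smul_right, real_inner_comm, hw]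
    rw [h1, h2]
    exact mul_le_mul_of_nonneg_left (hfC c hc) (inv_nonneg.2 (norm_nonneg _))
  linarith

end Aux

theorem sum_extend_zero' {ι β M : Type*} [Fintype ι] [Fintype β] [AddCommMonoid M]
    (e : ι ↪ β) (g : β → M) (h0 : ∀ j, (¬∃ i, e i = j) → g j = 0) :
    ∑ j, g j = ∑ i, g (e i) := by
  classical
  have h1 : ∑ x ∈ Finset.univ.image e, g x = ∑ i, g (e i) :=
    Finset.sum_image (fun i _ i' _ h => e.injective h)
  rw [← h1]
  refine (Finset.sum_subset (Finset.subset_univ _) fun j _ hj => ?_).symm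
  refine h0 j fun ⟨i, hi⟩ => hj ?_
  exact Finset.mem_image.2 ⟨i, Finset.mem_univ i, hi⟩

theorem isCompact_convexHull_of_isCompact {E : Type*} [NormedAddCommGroup E] [NormedSpace ℝ E]
    [FiniteDimensional ℝ E] {s : Set E} (hs : IsCompact s) : IsCompact (convexHull ℝ s) := by
  classical
  rcases s.eq_empty_or_nonempty with rfl | ⟨a, ha⟩
  · simp
  set m := Module.finrank ℝ E + 1 with hm
  have hFcont : Continuous (fun p : (Fin m → ℝ) × (Fin m → E) => ∑ i, p.1 i • p.2 i) := by
    refine continuous_finset_sum _ fun i _ => ?_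
    exact ((continuous_apply i).comp continuous_fst).smul ((continuous_apply i).comp continuous_snd)
  have hDcpt : IsCompact ((stdSimplex ℝ (Fin m)) ×ˢ (Set.univ.pi fun _ : Fin m => s)) :=
    IsCompact.prod (isCompact_stdSimplex (𝕜 := ℝ) (ι := Fin m)) (isCompact_univ_pi fun _ => hs)
  have heq : convexHull ℝ s =
      (fun p : (Fin m → ℝ) × (Fin m → E) => ∑ i, p.1 i • p.2 i) ''
        ((stdSimplex ℝ (Fin m)) ×ˢ (Set.univ.pi fun _ : Fin m => s)) := by
    apply Set.Subset.antisymm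
    · intro x hx
      obtain ⟨ι, hι, z, w, hrange, hindep, hpos, hsum1, hsumx⟩ :=
        eq_pos_convex_span_of_mem_convexHull hx
      have hcard : Fintype.card ι ≤ m := by
        have h1 := hindep.card_le_finrank_succ
        have h2 : Module.finrank ℝ (vectorSpan ℝ (Set.range z)) ≤ Module.finrank ℝ E :=
          Submodule.finrank_le _
        omega
      obtain ⟨e⟩ : Nonempty (ι ↪ Fin m) :=
        Function.Embedding.nonempty_of_card_le (by simpa using hcard)
      set w' : Fin m → ℝ := Function.extend e w 0 with hw'
      set z' : Fin m → E := Function.extend e z (fun _ => a) with hz'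
      have hw's : w' ∈ stdSimplex ℝ (Fin m) := by
        refine ⟨fun j => ?_, ?_⟩
        · rcases em (∃ i, e i = j) with ⟨i, rfl⟩ | hj
          · rw [hw', e.injective.extend_apply]
            exact (hpos i).le
          · rw [hw', Function.extend_apply' _ _ _ hj]
            rfl
        · rw [show ∑ j, w' j = ∑ i, w' (e i) from
            sum_extend_zero' e w' fun j hj => by rw [hw', Function.extend_apply' _ _ _ hj]; rfl]
          calc ∑ i, w' (e i) = ∑ i, w i := by
                refine Finset.sum_congr rfl fun i _ => ?_
                rw [hw', e.injective.extend_apply]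
            _ = 1 := hsum1
      have hz's : ∀ j, z' j ∈ s := by
        intro j
        rcases em (∃ i, e i = j) with ⟨i, rfl⟩ | hj
        · rw [hz', e.injective.extend_apply]
          exact hrange (Set.mem_range_self i)
        · rw [hz', Function.extend_apply' _ _ _ hj]
          exact ha
      have hFx : ∑ j, w' j • z' j = x := by
        rw [show ∑ j, w' j • z' j = ∑ i, w' (e i) • z' (e i) from
          sum_extend_zero' e (fun j => w' j • z' j) fun j hj => by
            show w' j • z' j = 0
            rw [hw', Function.extend_apply' _ _ _ hj]; simp]
        calc ∑ i, w' (e i) • z' (e i) = ∑ i, w i • z i := by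
              refine Finset.sum_congr rfl fun i _ => ?_
              rw [hw', hz', e.injective.extend_apply, e.injective.extend_apply]
          _ = x := hsumx
      exact ⟨(w', z'), ⟨hw's, fun j _ => hz's j⟩, hFx⟩
    · rintro _ ⟨⟨w, z⟩, ⟨⟨hw0, hw1⟩, hz⟩, rfl⟩
      exact (convex_convexHull ℝ s).sum_mem (fun i _ => hw0 i) hw1
        fun i _ => subset_convexHull ℝ s (hz i (Set.mem_univ i))
  rw [heq]
  exact hDcpt.image hFcont

theorem optimal_containment_condition {n : ℕ}
    (K C : Set (EuclideanSpace ℝ (Fin n)))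
    (hKconv : Convex ℝ K) (hKcpt : IsCompact K) (hKne : K.Nonempty)
    (hCconv : Convex ℝ C) (hCcpt : IsCompact C) (hCint : (interior C).Nonempty)
    (hKC : K ⊆ C) (hcirc : circC K C = 1) :
    ∃ (j : ℕ), 2 ≤ j ∧ j ≤ n + 1 ∧
      ∃ (p u : Fin j → EuclideanSpace ℝ (Fin n)) (lam : Fin j → ℝ),
        (∀ i, p i ∈ K ∩ frontier C) ∧
        (∀ i, u i ≠ 0) ∧
        (∀ i, ∀ x ∈ C, (inner ℝ x (u i) : ℝ) ≤ inner ℝ (p i) (u i)) ∧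
        (∀ i, 0 < lam i) ∧
        ∑ i, lam i • u i = 0 := by
  classical
  have hCne : C.Nonempty := hCint.mono interior_subset
  set T : Set (EuclideanSpace ℝ (Fin n) × EuclideanSpace ℝ (Fin n)) :=
    {z | ‖z.1‖ = 1 ∧ z.2 ∈ K ∧ z.2 ∈ frontier C ∧ ∀ y ∈ C, ⟪y, z.1⟫ ≤ ⟪z.2, z.1⟫} with hTdef
  set N := Prod.fst '' T with hNdef
  have hNnorm : ∀ u ∈ N, ‖u‖ = 1 := by rintro u ⟨q, hq, rfl⟩; exact hq.1
  have hmem : (0 : EuclideanSpace ℝ (Fin n)) ∈ convexHull ℝ N := by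
    by_contra h0
    have h4closed : IsClosed {z : EuclideanSpace ℝ (Fin n) × EuclideanSpace ℝ (Fin n) | ∀ y ∈ C, ⟪y, z.1⟫ ≤ ⟪z.2, z.1⟫} := by
      have : {z : EuclideanSpace ℝ (Fin n) × EuclideanSpace ℝ (Fin n) | ∀ y ∈ C, ⟪y, z.1⟫ ≤ ⟪z.2, z.1⟫} =
          ⋂ y ∈ C, {z : EuclideanSpace ℝ (Fin n) × EuclideanSpace ℝ (Fin n) | ⟪y, z.1⟫ ≤ ⟪z.2, z.1⟫} := by
        ext; simp
      rw [this]
      exact isClosed_biInter fun y hy =>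
        isClosed_le (continuous_const.inner continuous_fst) (continuous_snd.inner continuous_fst)
    have hTclosed : IsClosed T := by
      have : T = ({z : EuclideanSpace ℝ (Fin n) × EuclideanSpace ℝ (Fin n) | ‖z.1‖ = 1} ∩ ({z | z.2 ∈ K} ∩ ({z | z.2 ∈ frontier C} ∩
          {z : EuclideanSpace ℝ (Fin n) × EuclideanSpace ℝ (Fin n) | ∀ y ∈ C, ⟪y, z.1⟫ ≤ ⟪z.2, z.1⟫}))) := by
        ext z; simp only [hTdef, Set.mem_setOf_eq, Set.mem_inter_iff]
      rw [this]
      exact (isClosed_eq continuous_fst.norm continuous_const).inter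
        ((hKcpt.isClosed.preimage continuous_snd).inter
          ((isClosed_frontier.preimage continuous_snd).inter h4closed))
    have hTcpt : IsCompact T :=
      ((isCompact_sphere (0 : EuclideanSpace ℝ (Fin n)) 1).prod hKcpt).of_isClosed_subset hTclosed
        (fun z hz => ⟨mem_sphere_zero_iff_norm.2 hz.1, hz.2.1⟩)
    have hNcpt : IsCompact N := hTcpt.image continuous_fst
    obtain ⟨f, ε, hfε, hfb⟩ := geometric_hahn_banach_point_closed
      (convex_convexHull ℝ N) (isCompact_convexHull_of_isCompact hNcpt).isClosed h0
    have hε : 0 < ε := by simpa using hfε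
    set v := (InnerProductSpace.toDual ℝ (EuclideanSpace ℝ (Fin n))).symm f with hvdef
    have hv : ∀ x : EuclideanSpace ℝ (Fin n), ⟪v, x⟫ = f x := fun x => InnerProductSpace.toDual_symm_apply
    have hNv : ∀ u ∈ N, ε < ⟪v, u⟫ := fun u hu => by
      rw [hv]; exact hfb u (subset_convexHull ℝ N hu)
    have hΨnonneg : ∀ x ∈ K, ∀ u : EuclideanSpace ℝ (Fin n), 0 ≤ suppF C u - ⟪x, u⟫ :=
      fun x hx u => sub_nonneg.2 (le_suppF hCcpt (hKC hx) u)
    have hApos : ∀ x ∈ K, ∀ u : EuclideanSpace ℝ (Fin n), ‖u‖ = 1 → ⟪v, u⟫ ≤ ε / 2 →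
        0 < suppF C u - ⟪x, u⟫ := by
      intro x hx u hu hvu
      rcases lt_or_eq_of_le (le_suppF hCcpt (hKC hx) u) with h | h
      · exact sub_pos.2 h
      · exfalso
        have hxint : x ∉ interior C := by
          intro hxi
          obtain ⟨r, hr0, hball⟩ := Metric.isOpen_iff.1 isOpen_interior x hxi
          have hballmem : x + (r / 2) • u ∈ ball x r := by
            rw [mem_ball, dist_eq_norm, add_sub_cancel_left, norm_smul, hu, mul_one,
              Real.norm_eq_abs, abs_of_pos (by linarith)]
            linarith
          have hx' : x + (r / 2) • u ∈ C := interior_subset (hball hballmem)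
          have hle := le_suppF hCcpt hx' u
          rw [inner_add_left, real_inner_smul_left, real_inner_self_eq_norm_mul_norm, hu] at hle
          rw [← h] at hle
          nlinarith
        have hT' : (u, x) ∈ T :=
          ⟨hu, hx, ⟨subset_closure (hKC hx), hxint⟩,
            fun y hy => le_of_le_of_eq (le_suppF hCcpt hy u) h.symm⟩
        have := hNv u ⟨(u, x), hT', rfl⟩
        linarith
    have hkey : ∃ t : ℝ, 0 < t ∧ ∀ x ∈ K, ∀ u : EuclideanSpace ℝ (Fin n), ‖u‖ = 1 →
        0 < (suppF C u - ⟪x, u⟫) + t * ⟪v, u⟫ := by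
      set A : Set (EuclideanSpace ℝ (Fin n) × EuclideanSpace ℝ (Fin n)) := (K ×ˢ sphere (0 : EuclideanSpace ℝ (Fin n)) 1) ∩ {z | ⟪v, z.2⟫ ≤ ε / 2} with hAdef
      have hAcpt : IsCompact A :=
        (hKcpt.prod (isCompact_sphere 0 1)).inter_right
          (isClosed_le (continuous_const.inner continuous_snd) continuous_const)
      have hΨcont : Continuous (fun z : EuclideanSpace ℝ (Fin n) × EuclideanSpace ℝ (Fin n) => suppF C z.2 - ⟪z.1, z.2⟫) :=
        ((continuous_suppF hCcpt hCne).comp continuous_snd).sub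
          (continuous_fst.inner continuous_snd)
      rcases A.eq_empty_or_nonempty with hA | hA
      · refine ⟨1, one_pos, fun x hx u hu => ?_⟩
        have hvu : ε / 2 < ⟪v, u⟫ := by
          by_contra hc
          push_neg at hc
          have hmemA : (x, u) ∈ A := ⟨⟨hx, mem_sphere_zero_iff_norm.2 hu⟩, hc⟩
          rw [hA] at hmemA
          exact hmemA
        have := hΨnonneg x hx u
        linarith
      · obtain ⟨z0, hz0A, hz0min⟩ := hAcpt.exists_isMinOn hA hΨcont.continuousOn
        have hδ0 : 0 < suppF C z0.2 - ⟪z0.1, z0.2⟫ :=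
          hApos z0.1 hz0A.1.1 z0.2 (mem_sphere_zero_iff_norm.1 hz0A.1.2) hz0A.2
        set δ := suppF C z0.2 - ⟪z0.1, z0.2⟫ with hδ
        have hv1 : (0:ℝ) < ‖v‖ + 1 := by positivity
        set t := δ / (2 * (‖v‖ + 1)) with htdef
        have ht0 : 0 < t := by positivity
        have ht1 : t * (‖v‖ + 1) = δ / 2 := by
          rw [htdef]; field_simp
        refine ⟨t, ht0, fun x hx u hu => ?_⟩
        by_cases hvu : ⟪v, u⟫ ≤ ε / 2
        · have hmemA : (x, u) ∈ A := ⟨⟨hx, mem_sphere_zero_iff_norm.2 hu⟩, hvu⟩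
          have h1 : δ ≤ suppF C u - ⟪x, u⟫ := isMinOn_iff.1 hz0min (x, u) hmemA
          have h2 : |⟪v, u⟫| ≤ ‖v‖ := by
            have := abs_real_inner_le_norm v u
            rwa [hu, mul_one] at this
          have habs := abs_le.1 h2
          have e1 : -(t * (‖v‖ + 1)) ≤ t * ⟪v, u⟫ := by nlinarith [habs.1]
          rw [ht1] at e1
          linarith
        · push_neg at hvu
          have := hΨnonneg x hx u
          nlinarith
    obtain ⟨t, ht0, ht⟩ := hkey
    set K' := (fun x : EuclideanSpace ℝ (Fin n) => x - t • v) '' K with hK'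
    have hK'sub : K' ⊆ interior C := by
      rintro _ ⟨x, hx, rfl⟩
      refine mem_interior_of_suppF hCconv hCint fun u hu => ?_
      have h1 : ⟪x - t • v, u⟫ = ⟪x, u⟫ - t * ⟪v, u⟫ := by
        rw [inner_sub_left, real_inner_smul_left]
      have h2 := ht x hx u hu
      rw [h1]
      linarith
    have hK'cpt : IsCompact K' := hKcpt.image (continuous_id.sub continuous_const)
    obtain ⟨δ', hδ'0, hthick⟩ :=
      hK'cpt.exists_thickening_subset_open isOpen_interior hK'sub
    obtain ⟨c, hc⟩ := hCint
    obtain ⟨r, hr⟩ := hK'cpt.isBounded.subset_closedBall c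
    set R := max r 1 with hRdef
    have hR1 : (1:ℝ) ≤ R := le_max_right _ _
    have hR0 : (0:ℝ) < R := lt_of_lt_of_le one_pos hR1
    have hKR : ∀ k ∈ K', ‖k - c‖ ≤ R := fun k hk => by
      have := hr hk
      rw [mem_closedBall, dist_eq_norm] at this
      exact this.trans (le_max_left _ _)
    set ρ := R / (R + δ' / 2) with hρdef
    have hρ0 : 0 < ρ := by positivity
    have hρ1 : ρ < 1 := by
      rw [hρdef, div_lt_one (by positivity)]
      linarith
    have hKsub : K ⊆ (t • v + (1 - ρ) • c) +ᵥ ρ • C := by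
      intro x hx
      have hkK' : x - t • v ∈ K' := ⟨x, hx, rfl⟩
      set k := x - t • v with hk
      set k' := c + ρ⁻¹ • (k - c) with hk'
      have hinv : ρ⁻¹ - 1 = δ' / (2 * R) := by
        rw [hρdef, inv_div]
        rw [div_sub_one (ne_of_gt hR0), div_eq_div_iff hR0.ne' (by positivity)]
        ring
      have hk'C : k' ∈ C := by
        apply interior_subset
        apply hthick
        rw [Metric.mem_thickening_iff]
        refine ⟨k, hkK', ?_⟩
        have h1 : k' - k = (ρ⁻¹ - 1) • (k - c) := by
          rw [hk']
          module
        have hd : dist k' k = (ρ⁻¹ - 1) * ‖k - c‖ := by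
          rw [dist_eq_norm, h1, norm_smul, Real.norm_eq_abs,
            abs_of_nonneg (by rw [hinv]; positivity)]
        rw [hd, hinv]
        calc δ' / (2 * R) * ‖k - c‖ ≤ δ' / (2 * R) * R :=
              mul_le_mul_of_nonneg_left (hKR k hkK') (by positivity)
          _ = δ' / 2 := by field_simp
          _ < δ' := by linarith
      refine Set.mem_vadd_set.2 ⟨ρ • k', Set.smul_mem_smul_set hk'C, ?_⟩
      show t • v + (1 - ρ) • c + ρ • k' = x
      rw [hk', hk, smul_add, smul_smul, mul_inv_cancel₀ (ne_of_gt hρ0), one_smul]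
      module
    have hle : circC K C ≤ ρ :=
      csInf_le ⟨0, fun s hs => hs.1⟩ ⟨hρ0.le, _, hKsub⟩
    rw [hcirc] at hle
    linarith
  obtain ⟨ι, hι, z, w, hrange, hindep, hpos, hsum1, hsum0⟩ :=
    eq_pos_convex_span_of_mem_convexHull hmem
  have hcard : Fintype.card ι ≤ n + 1 := by
    have h1 := hindep.card_le_finrank_succ
    have h2 : Module.finrank ℝ (vectorSpan ℝ (Set.range z)) ≤ Module.finrank ℝ (EuclideanSpace ℝ (Fin n)) :=
      Submodule.finrank_le _
    have h3 : Module.finrank ℝ (EuclideanSpace ℝ (Fin n)) = n := finrank_euclideanSpace_fin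
    omega
  have hcard2 : 2 ≤ Fintype.card ι := by
    by_contra hlt
    push_neg at hlt
    have h01 : Fintype.card ι = 0 ∨ Fintype.card ι = 1 := by omega
    rcases h01 with h | h
    · haveI := Fintype.card_eq_zero_iff.1 h
      rw [Finset.univ_eq_empty, Finset.sum_empty] at hsum1
      exact one_ne_zero hsum1.symm
    · obtain ⟨i0, hi0⟩ := Fintype.card_eq_one_iff.1 h
      haveI : Unique ι := ⟨⟨i0⟩, fun i => hi0 i⟩
      rw [Fintype.sum_unique] at hsum0
      have hz0 : z default = 0 := by
        rcases smul_eq_zero.1 hsum0 with h' | h'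
        · exact absurd h' (ne_of_gt (hpos default))
        · exact h'
      have hn1 : ‖z default‖ = 1 := hNnorm _ (hrange (Set.mem_range_self default))
      rw [hz0] at hn1
      simp at hn1
  set j := Fintype.card ι with hj
  have e : Fin j ≃ ι := (Fintype.equivFin ι).symm
  choose q hqT hq1 using fun i : Fin j =>
    (Set.mem_image _ _ _).1 (hrange (Set.mem_range_self (e i)))
  refine ⟨j, hcard2, hcard, fun i => (q i).2, fun i => z (e i), fun i => w (e i),
    fun i => ⟨(hqT i).2.1, (hqT i).2.2.1⟩, ?_, ?_, fun i => hpos (e i), ?_⟩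
  · intro i hzero
    have hzero' : z (e i) = 0 := hzero
    have h1 : ‖(q i).1‖ = 1 := (hqT i).1
    rw [hq1 i, hzero'] at h1
    simp at h1
  · intro i x hx
    have h4 := (hqT i).2.2.2 x hx
    rw [hq1 i] at h4
    exact h4
  · show ∑ i : Fin j, w (e i) • z (e i) = 0
    rw [Fintype.sum_equiv e (fun i => w (e i) • z (e i)) (fun i => w i • z i) (fun i => rfl)]
    exact hsum0
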